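/- arXiv:1511.06918 — 3 statements merged into one kernel-verified Lean document; each statement's English description precedes it below -/
import Mathlib

section
/- If the empirical CDF satisfies |\widehat{F}(v) - F(v)| \le \epsilon for all v (the DKW event), then for all q \in [0,1]: q \cdot \widehat{F^{-1}}(1 - q - \epsilon) \le q \cdot F^{-1}(1-q), i.e., the empirical lower revenue curve \widehat{R}_{min}(q) is pointwise at most the true revenue curve R(q). -/
/-- under the DKW event `|F̂(v) - F(v)| ≤ ε`, the empirical lower revenue
curve `R̂min(q) = q·F̂⁻¹(1-q-ε)` is pointwise at most the true revenue curve
`R(q) = q·F⁻¹(1-q)`. -/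
theorem stmt_1 (m : ℕ) (hm : 0 < m) (H ε : ℝ) (hH : 0 ≤ H) (hε : 0 ≤ ε)
    (F Finv Fhat Qhat : ℝ → ℝ)
    (hFinv : ∀ q ∈ Set.Icc (0:ℝ) 1, F (Finv q) = q)
    (hFinv_range : ∀ q ∈ Set.Icc (0:ℝ) 1, Finv q ∈ Set.Icc (0:ℝ) H)
    (hQhat_mono : Monotone Qhat)
    (hsand : ∀ v ∈ Set.Icc (0:ℝ) H, Qhat (Fhat v) ≤ v ∧ v ≤ Qhat (Fhat v + 1 / m))
    (hdkw : ∀ v, |Fhat v - F v| ≤ ε) :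
    ∀ q ∈ Set.Icc (0:ℝ) 1, q * Qhat (1 - q - ε) ≤ q * Finv (1 - q) := by
  intro q hq
  have hq1 : (1 - q) ∈ Set.Icc (0:ℝ) 1 := by
    constructor <;> [linarith [hq.2]; linarith [hq.1]]
  set v := Finv (1 - q) with hv
  have hvmem : v ∈ Set.Icc (0:ℝ) H := hFinv_range _ hq1
  have hFv : F v = 1 - q := hFinv _ hq1
  have hdk := hdkw v
  have h1 : 1 - q - ε ≤ Fhat v := by
    have := abs_le.mp hdk
    linarith [this.1]
  have h2 : Qhat (1 - q - ε) ≤ Qhat (Fhat v) := hQhat_mono h1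
  have h3 : Qhat (Fhat v) ≤ v := (hsand v hvmem).1
  exact mul_le_mul_of_nonneg_left (h2.trans h3) hq.1
end

section
/- If the empirical CDF satisfies |\widehat{F}(v) - F(v)| \le \epsilon for all v, then for all q \in [0,1]: q \cdot F^{-1}(1-q) \le q \cdot \widehat{F^{-1}}(1 - q + \epsilon + 1/m), i.e., the true revenue curve R(q) is pointwise at most the empirical upper revenue curve \widehat{R}_{max}(q). -/
/-- under the DKW event `|F̂(v) - F(v)| ≤ ε`, the true revenue curve
`R(q) = q·F⁻¹(1-q)` is pointwise at most the empirical upper revenue curve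
`R̂max(q) = q·F̂⁻¹(1-q+ε+1/m)`. -/
theorem stmt_2 (m : ℕ) (hm : 0 < m) (H ε : ℝ) (hH : 0 ≤ H) (hε : 0 ≤ ε)
    (F Finv Fhat Qhat : ℝ → ℝ)
    (hFinv : ∀ q ∈ Set.Icc (0:ℝ) 1, F (Finv q) = q)
    (hFinv_range : ∀ q ∈ Set.Icc (0:ℝ) 1, Finv q ∈ Set.Icc (0:ℝ) H)
    (hQhat_mono : Monotone Qhat)
    (hsand : ∀ v ∈ Set.Icc (0:ℝ) H, Qhat (Fhat v) ≤ v ∧ v ≤ Qhat (Fhat v + 1 / m))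
    (hdkw : ∀ v, |Fhat v - F v| ≤ ε) :
    ∀ q ∈ Set.Icc (0:ℝ) 1, q * Finv (1 - q) ≤ q * Qhat (1 - q + ε + 1 / m) := by
  intro q hq
  have h1q : 1 - q ∈ Set.Icc (0:ℝ) 1 := ⟨by linarith [hq.2], by linarith [hq.1]⟩
  set v := Finv (1 - q) with hv
  have hvr := hFinv_range _ h1q
  have hFv : F v = 1 - q := hFinv _ h1q
  have hdk := abs_le.mp (hdkw v)
  have h2 : Fhat v + 1 / m ≤ 1 - q + ε + 1 / m := by
    have : Fhat v ≤ F v + ε := by linarith [hdk.2]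
    rw [hFv] at this; linarith
  have h3 : v ≤ Qhat (1 - q + ε + 1 / m) :=
    le_trans (hsand v hvr).2 (hQhat_mono h2)
  exact mul_le_mul_of_nonneg_left h3 hq.1
end

section
/- Suppose \widehat{R}_{max}^\star and \widehat{R}_{min}^\star are the optimally ironed-and-reserved revenue curves of \widehat{R}_{max} and \widehat{R}_{min} respectively, where \widehat{R}_{max}(q) = q\, G(1-q+\epsilon+1/m) and \widehat{R}_{min}(q) = q\, G(1-q-\epsilon) for a common nondecreasing G : \mathbb{R} \to [0,H]. Then for all q \in [0,1]: \widehat{R}_{max}^\star(q) - \widehat{R}_{min}^\star(q) \le (2\epsilon + 1/m) H. -/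
/-- The least concave majorant of `h` on `[0,1]`. -/
noncomputable def CH (h : ℝ → ℝ) (q : ℝ) : ℝ :=
  sInf {y | ∃ g : ℝ → ℝ, ConcaveOn ℝ (Set.Icc 0 1) g ∧
    (∀ x ∈ Set.Icc (0:ℝ) 1, h x ≤ g x) ∧ y = g q}

/-- The optimally ironed-and-reserved revenue curve:
`R⋆(q) = max (CH R q) (sup_{q' ≤ q} CH R q')`. -/
noncomputable def Rstar (R : ℝ → ℝ) (q : ℝ) : ℝ :=
  max (CH R q) (sSup (CH R '' Set.Icc 0 q))

namespace Stmt7Aux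

def Mset (R : ℝ → ℝ) (q : ℝ) : Set ℝ :=
  {y | ∃ g : ℝ → ℝ, ConcaveOn ℝ (Set.Icc 0 1) g ∧
    (∀ x ∈ Set.Icc (0:ℝ) 1, R x ≤ g x) ∧ y = g q}

lemma CH_eq (R : ℝ → ℝ) (q : ℝ) : CH R q = sInf (Mset R q) := rfl

lemma Mset_nonempty {R : ℝ → ℝ} {H : ℝ} (hH : ∀ x ∈ Set.Icc (0:ℝ) 1, R x ≤ H) (q : ℝ) :
    (Mset R q).Nonempty :=
  ⟨H, fun _ => H, concaveOn_const _ (convex_Icc _ _), fun x hx => hH x hx, rfl⟩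

lemma Mset_bddBelow {R : ℝ → ℝ} {q : ℝ} (hq : q ∈ Set.Icc (0:ℝ) 1) :
    BddBelow (Mset R q) := by
  refine ⟨R q, ?_⟩
  rintro y ⟨g, hg, hmaj, rfl⟩
  exact hmaj q hq

lemma le_CH {R : ℝ → ℝ} {H : ℝ} (hH : ∀ x ∈ Set.Icc (0:ℝ) 1, R x ≤ H)
    {q : ℝ} (hq : q ∈ Set.Icc (0:ℝ) 1) : R q ≤ CH R q := by
  rw [CH_eq]
  refine le_csInf (Mset_nonempty hH q) ?_
  rintro y ⟨g, hg, hmaj, rfl⟩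
  exact hmaj q hq

lemma CH_le {R g : ℝ → ℝ} (hg : ConcaveOn ℝ (Set.Icc 0 1) g)
    (hmaj : ∀ x ∈ Set.Icc (0:ℝ) 1, R x ≤ g x) {q : ℝ} (hq : q ∈ Set.Icc (0:ℝ) 1) :
    CH R q ≤ g q := by
  rw [CH_eq]
  exact csInf_le (Mset_bddBelow hq) ⟨g, hg, hmaj, rfl⟩

lemma CH_le_H {R : ℝ → ℝ} {H : ℝ} (hH : ∀ x ∈ Set.Icc (0:ℝ) 1, R x ≤ H)
    {q : ℝ} (hq : q ∈ Set.Icc (0:ℝ) 1) : CH R q ≤ H :=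
  CH_le (concaveOn_const _ (convex_Icc _ _)) hH hq

lemma CH_concave (R : ℝ → ℝ) {H : ℝ} (hH : ∀ x ∈ Set.Icc (0:ℝ) 1, R x ≤ H) :
    ConcaveOn ℝ (Set.Icc 0 1) (CH R) := by
  refine ⟨convex_Icc _ _, fun x hx y hy a b ha hb hab => ?_⟩
  rw [CH_eq (q := a • x + b • y)]
  refine le_csInf (Mset_nonempty hH _) ?_
  rintro z ⟨g, hg, hmaj, rfl⟩
  have h1 : CH R x ≤ g x := CH_le hg hmaj hx
  have h2 : CH R y ≤ g y := CH_le hg hmaj hy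
  have h3 := hg.2 hx hy ha hb hab
  simp only [smul_eq_mul] at *
  nlinarith [mul_le_mul_of_nonneg_left h1 ha, mul_le_mul_of_nonneg_left h2 hb]

-- the running sup
noncomputable def S (R : ℝ → ℝ) (q : ℝ) : ℝ := sSup (CH R '' Set.Icc 0 q)

lemma S_bddAbove {R : ℝ → ℝ} {H : ℝ} (hH : ∀ x ∈ Set.Icc (0:ℝ) 1, R x ≤ H)
    {q : ℝ} (hq : q ∈ Set.Icc (0:ℝ) 1) : BddAbove (CH R '' Set.Icc 0 q) := by
  refine ⟨H, ?_⟩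
  rintro z ⟨u, hu, rfl⟩
  exact CH_le_H hH ⟨hu.1, hu.2.trans hq.2⟩

lemma S_nonempty {R : ℝ → ℝ} {q : ℝ} (hq : 0 ≤ q) : (CH R '' Set.Icc 0 q).Nonempty :=
  ⟨CH R 0, 0, ⟨le_refl _, hq⟩, rfl⟩

lemma CH_le_S {R : ℝ → ℝ} {H : ℝ} (hH : ∀ x ∈ Set.Icc (0:ℝ) 1, R x ≤ H)
    {q : ℝ} (hq : q ∈ Set.Icc (0:ℝ) 1) {u : ℝ} (hu : u ∈ Set.Icc 0 q) :
    CH R u ≤ S R q :=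
  le_csSup (S_bddAbove hH hq) ⟨u, hu, rfl⟩

lemma S_mono {R : ℝ → ℝ} {H : ℝ} (hH : ∀ x ∈ Set.Icc (0:ℝ) 1, R x ≤ H)
    {x q : ℝ} (hx : 0 ≤ x) (hxq : x ≤ q) (hq : q ∈ Set.Icc (0:ℝ) 1) :
    S R x ≤ S R q :=
  csSup_le_csSup (S_bddAbove hH hq) (S_nonempty hx)
    (Set.image_mono (Set.Icc_subset_Icc_right hxq))

lemma S_concave (R : ℝ → ℝ) {H : ℝ} (hH : ∀ x ∈ Set.Icc (0:ℝ) 1, R x ≤ H) :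
    ConcaveOn ℝ (Set.Icc 0 1) (S R) := by
  have hCH := CH_concave R hH
  refine ⟨convex_Icc _ _, fun x hx y hy a b ha hb hab => ?_⟩
  simp only [smul_eq_mul]
  set z := a * x + b * y with hz
  have hzmem : z ∈ Set.Icc (0:ℝ) 1 := by
    constructor
    · nlinarith [mul_nonneg ha hx.1, mul_nonneg hb hy.1]
    · nlinarith [hx.2, hy.2]
  -- key pointwise inequality
  have key : ∀ u ∈ Set.Icc (0:ℝ) x, ∀ v ∈ Set.Icc (0:ℝ) y,
      a * CH R u + b * CH R v ≤ S R z := by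
    intro u hu v hv
    have hu1 : u ∈ Set.Icc (0:ℝ) 1 := ⟨hu.1, hu.2.trans hx.2⟩
    have hv1 : v ∈ Set.Icc (0:ℝ) 1 := ⟨hv.1, hv.2.trans hy.2⟩
    have hconc := hCH.2 hu1 hv1 ha hb hab
    simp only [smul_eq_mul] at hconc
    have hmem : a * u + b * v ∈ Set.Icc 0 z := by
      constructor
      · nlinarith [mul_nonneg ha hu.1, mul_nonneg hb hv.1]
      · have := mul_le_mul_of_nonneg_left hu.2 ha
        have := mul_le_mul_of_nonneg_left hv.2 hb
        linarith
    exact hconc.trans (CH_le_S hH hzmem hmem)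
  rcases eq_or_lt_of_le ha with rfl | ha'
  · have hb1 : b = 1 := by linarith
    subst hb1
    simp only [zero_mul, one_mul, zero_add] at *
    refine csSup_le (S_nonempty hy.1) ?_
    rintro w ⟨v, hv, rfl⟩
    have := key 0 ⟨le_refl _, hx.1⟩ v hv
    simpa using this
  rcases eq_or_lt_of_le hb with rfl | hb'
  · have ha1 : a = 1 := by linarith
    subst ha1
    simp only [one_mul, zero_mul, add_zero] at *
    refine csSup_le (S_nonempty hx.1) ?_
    rintro w ⟨u, hu, rfl⟩
    have := key u hu 0 ⟨le_refl _, hy.1⟩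
    simpa using this
  -- a, b > 0
  have step1 : ∀ u ∈ Set.Icc (0:ℝ) x, a * CH R u + b * S R y ≤ S R z := by
    intro u hu
    have : S R y ≤ (S R z - a * CH R u) / b := by
      refine csSup_le (S_nonempty hy.1) ?_
      rintro w ⟨v, hv, rfl⟩
      rw [le_div_iff₀ hb']
      nlinarith [key u hu v hv]
    rw [le_div_iff₀ hb'] at this
    nlinarith
  have step2 : S R x ≤ (S R z - b * S R y) / a := by
    refine csSup_le (S_nonempty hx.1) ?_
    rintro w ⟨u, hu, rfl⟩
    rw [le_div_iff₀ ha']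
    nlinarith [step1 u hu]
  rw [le_div_iff₀ ha'] at step2
  nlinarith

end Stmt7Aux

open Stmt7Aux in
/-- with `R̂max(q) = q·G(1-q+ε+1/m)` and `R̂min(q) = q·G(1-q-ε)` for a
common nondecreasing `G : ℝ → [0,H]`, the optimally ironed-and-reserved curves
satisfy `R̂max⋆(q) - R̂min⋆(q) ≤ (2ε+1/m)·H` for all `q ∈ [0,1]`. -/
theorem stmt_7 (G : ℝ → ℝ) (H ε : ℝ) (m : ℕ) (hm : 1 ≤ m) (hH : 0 < H)
    (hε : 0 < ε) (hG : Monotone G) (hGr : ∀ x, G x ∈ Set.Icc 0 H) :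
    ∀ q ∈ Set.Icc (0:ℝ) 1,
      Rstar (fun q => q * G (1 - q + ε + 1 / m)) q
        - Rstar (fun q => q * G (1 - q - ε)) q ≤ (2 * ε + 1 / m) * H := by
  intro q hq
  set Rmax : ℝ → ℝ := fun q => q * G (1 - q + ε + 1 / m) with hRmax
  set Rmin : ℝ → ℝ := fun q => q * G (1 - q - ε) with hRmin
  have hm0 : (0:ℝ) < 1 / m := by
    have : (0:ℝ) < (m:ℝ) := by exact_mod_cast Nat.lt_of_lt_of_le Nat.zero_lt_one hm
    positivity
  set s : ℝ := 2 * ε + 1 / m with hs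
  have hs0 : 0 < s := by rw [hs]; linarith
  have hRmaxH : ∀ x ∈ Set.Icc (0:ℝ) 1, Rmax x ≤ H := by
    intro x hx
    calc x * G (1 - x + ε + 1 / m) ≤ 1 * H :=
          mul_le_mul hx.2 (hGr _).2 (hGr _).1 zero_le_one
      _ = H := one_mul H
  have hRminH : ∀ x ∈ Set.Icc (0:ℝ) 1, Rmin x ≤ H := by
    intro x hx
    calc x * G (1 - x - ε) ≤ 1 * H :=
          mul_le_mul hx.2 (hGr _).2 (hGr _).1 zero_le_one
      _ = H := one_mul H
  -- the majorant g = S Rmin + s*H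
  have hgconc : ConcaveOn ℝ (Set.Icc 0 1) (fun u => S Rmin u + s * H) :=
    (S_concave Rmin hRminH).add (concaveOn_const _ (convex_Icc _ _))
  have hgmaj : ∀ x ∈ Set.Icc (0:ℝ) 1, Rmax x ≤ S Rmin x + s * H := by
    intro x hx
    have hS0 : 0 ≤ S Rmin x := by
      have h1 : Rmin 0 ≤ CH Rmin 0 := le_CH hRminH ⟨le_refl _, zero_le_one⟩
      have h2 : CH Rmin 0 ≤ S Rmin x := CH_le_S hRminH hx ⟨le_refl _, hx.1⟩
      have : Rmin 0 = 0 := by simp [hRmin]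
      linarith
    rcases le_or_gt x s with hxs | hxs
    · have : Rmax x ≤ s * H := by
        calc x * G (1 - x + ε + 1 / m) ≤ x * H :=
              mul_le_mul_of_nonneg_left (hGr _).2 hx.1
          _ ≤ s * H := mul_le_mul_of_nonneg_right hxs hH.le
      linarith
    · have hxs1 : x - s ∈ Set.Icc (0:ℝ) 1 := ⟨by linarith, by linarith [hx.2]⟩
      have harg : (1 - x + ε + 1 / (m:ℝ)) = 1 - (x - s) - ε := by rw [hs]; ring
      have h1 : Rmin (x - s) ≤ CH Rmin (x - s) := le_CH hRminH hxs1
      have h2 : CH Rmin (x - s) ≤ S Rmin x :=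
        CH_le_S hRminH hx ⟨hxs1.1, by linarith⟩
      have h3 : Rmax x = Rmin (x - s) + s * G (1 - (x - s) - ε) := by
        simp only [hRmax, hRmin, harg]; ring
      have h4 : s * G (1 - (x - s) - ε) ≤ s * H :=
        mul_le_mul_of_nonneg_left (hGr _).2 hs0.le
      linarith
  -- bound Rstar Rmax
  have hCHmax : ∀ u ∈ Set.Icc (0:ℝ) 1, CH Rmax u ≤ S Rmin u + s * H :=
    fun u hu => CH_le hgconc hgmaj hu
  have hA : CH Rmax q ≤ S Rmin q + s * H := hCHmax q hq
  have hB : sSup (CH Rmax '' Set.Icc 0 q) ≤ S Rmin q + s * H := by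
    refine csSup_le (S_nonempty hq.1) ?_
    rintro w ⟨u, hu, rfl⟩
    have := hCHmax u ⟨hu.1, hu.2.trans hq.2⟩
    have hmono := S_mono hRminH hu.1 hu.2 hq
    linarith
  have hmax : Rstar Rmax q ≤ S Rmin q + s * H := max_le hA hB
  have hmin : S Rmin q ≤ Rstar Rmin q := le_max_right _ _
  have : Rstar Rmax q - Rstar Rmin q ≤ s * H := by
    have : S Rmin q = sSup (CH Rmin '' Set.Icc 0 q) := rfl
    linarith
  rw [hs] at this
  exact this
end
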